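/- For every nonempty countable set σ, the space 𝐋_σ is an interior image of 𝐋₂: there exists a surjective map from L₂ onto L_σ that is continuous and open with respect to the Scott topologies. -/

import Mathlib

open Set

/-- Finite and infinite `σ`-valued sequences, encoded as functions `ℕ → Option σ` whose
domain of definition is an initial segment of `ℕ`. -/
structure Lgen (σ : Type*) where
  toFun : ℕ → Option σ
  init : ∀ n, toFun (n + 1) ≠ none → toFun n ≠ none

/-- The initial-segment (prefix) partial order on `Lgen σ`. -/
instance Lgen.instPartialOrder {σ : Type*} : PartialOrder (Lgen σ) where
  le f g := ∀ (n : ℕ) (s : σ), f.toFun n = some s → g.toFun n = some s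
  le_refl f n s h := h
  le_trans f g h hfg hgh n s hs := hgh n s (hfg n s hs)
  le_antisymm f g hfg hgf := by
    obtain ⟨ff, hf⟩ := f
    obtain ⟨gf, hg⟩ := g
    have hfun : ff = gf := by
      funext n
      cases hfn : ff n with
      | some s =>
        have h2 : gf n = some s := hfg n s hfn
        exact h2.symm
      | none =>
        cases hgn : gf n with
        | some s =>
          have h2 : ff n = some s := hgf n s hgn
          rw [hfn] at h2
          exact absurd h2 (by simp)
        | none => rfl
    subst hfun
    rfl

/-- The finite sequence given by a list, as an element of `Lgen σ`. -/
def Lgen.ofList {σ : Type*} (l : List σ) : Lgen σ where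
  toFun n := l[n]?
  init n h := by
    simp only [ne_eq, List.getElem?_eq_none_iff, not_le] at h ⊢
    omega

/-- The infinite binary tree with limits `L₂`: finite and infinite binary sequences with the
initial-segment order. -/
abbrev L2 : Type := Lgen Bool

/-- The Scott topology of a preorder: opens are the upper sets `U` such that every nonempty
directed set whose least upper bound lies in `U` meets `U`. -/
def scottTopology (α : Type*) [Preorder α] : TopologicalSpace α where
  IsOpen U := IsUpperSet U ∧ ∀ d : Set α, d.Nonempty → DirectedOn (· ≤ ·) d →
      ∀ x, IsLUB d x → x ∈ U → (d ∩ U).Nonempty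
  isOpen_univ := ⟨isUpperSet_univ, fun d hd _ _ _ _ => hd.imp fun y hy => ⟨hy, mem_univ y⟩⟩
  isOpen_inter := by
    rintro U V ⟨hU1, hU2⟩ ⟨hV1, hV2⟩
    refine ⟨hU1.inter hV1, fun d hdne hdir x hlub hx => ?_⟩
    obtain ⟨a, ha, haU⟩ := hU2 d hdne hdir x hlub hx.1
    obtain ⟨b, hb, hbV⟩ := hV2 d hdne hdir x hlub hx.2
    obtain ⟨c, hc, hac, hbc⟩ := hdir a ha b hb
    exact ⟨c, hc, hU1 hac haU, hV1 hbc hbV⟩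
  isOpen_sUnion := by
    intro S hS
    refine ⟨fun a b hab ha => ?_, fun d hdne hdir x hlub hx => ?_⟩
    · obtain ⟨U, hU, haU⟩ := ha
      exact ⟨U, hU, (hS U hU).1 hab haU⟩
    · obtain ⟨U, hU, hxU⟩ := hx
      obtain ⟨a, ha, haU⟩ := (hS U hU).2 d hdne hdir x hlub hxU
      exact ⟨a, ha, U, hU, haU⟩

/-- Each poset `L_σ` of finite and infinite `σ`-valued sequences carries the Scott topology. -/
instance {σ : Type*} : TopologicalSpace (Lgen σ) := scottTopology (Lgen σ)


namespace S10

variable {σ : Type*}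

lemma le_iff {x z : Lgen σ} :
    x ≤ z ↔ ∀ n s, x.toFun n = some s → z.toFun n = some s := Iff.rfl

lemma isOpen_iff {U : Set (Lgen σ)} :
    IsOpen U ↔ IsUpperSet U ∧ ∀ d : Set (Lgen σ), d.Nonempty → DirectedOn (· ≤ ·) d →
      ∀ x, IsLUB d x → x ∈ U → (d ∩ U).Nonempty := Iff.rfl

lemma lext {u v : Lgen σ} (hf : ∀ n, u.toFun n = v.toFun n) : u = v := by
  cases u with
  | mk uf ui =>
    cases v with
    | mk vf vi =>
      have : uf = vf := funext hf
      subst this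
      rfl

lemma dom_down {x : Lgen σ} : ∀ {m n : ℕ}, n ≤ m → x.toFun m ≠ none → x.toFun n ≠ none := by
  intro m
  induction m with
  | zero =>
    intro n h hm
    obtain rfl := Nat.le_zero.mp h
    exact hm
  | succ m ih =>
    intro n h hm
    rcases eq_or_lt_of_le h with rfl | h'
    · exact hm
    · exact ih (by omega) (x.init m hm)

/-- Truncation of a sequence to its first `n` entries. -/
def trunc (x : Lgen σ) (n : ℕ) : Lgen σ where
  toFun i := if i < n then x.toFun i else none
  init i hi := by
    by_cases h : i + 1 < n
    · rw [if_pos h] at hi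
      rw [if_pos (by omega)]
      exact x.init i hi
    · rw [if_neg h] at hi
      exact absurd rfl hi

lemma trunc_apply_of_lt {x : Lgen σ} {n i : ℕ} (h : i < n) :
    (trunc x n).toFun i = x.toFun i := if_pos h

lemma trunc_eq_some {x : Lgen σ} {n i : ℕ} {s : σ} :
    (trunc x n).toFun i = some s ↔ i < n ∧ x.toFun i = some s := by
  show (if i < n then x.toFun i else none) = some s ↔ _
  by_cases h : i < n
  · rw [if_pos h]; exact ⟨fun hs => ⟨h, hs⟩, fun hs => hs.2⟩
  · rw [if_neg h]
    constructor
    · intro hs; exact absurd hs (by simp)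
    · intro hs; exact absurd hs.1 h

lemma trunc_le (x : Lgen σ) (n : ℕ) : trunc x n ≤ x :=
  fun _ _ hs => (trunc_eq_some.mp hs).2

lemma trunc_none (x : Lgen σ) (n : ℕ) : (trunc x n).toFun n = none := if_neg (lt_irrefl n)

lemma trunc_mono (x : Lgen σ) {m n : ℕ} (h : m ≤ n) : trunc x m ≤ trunc x n := by
  intro i s hs
  obtain ⟨h1, h2⟩ := trunc_eq_some.mp hs
  exact trunc_eq_some.mpr ⟨by omega, h2⟩

lemma le_trunc_of {u x : Lgen σ} {m : ℕ} (hux : u ≤ x) (hm : u.toFun m = none) :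
    u ≤ trunc x m := by
  intro i s hs
  have hi : i < m := by
    by_contra hge
    exact dom_down (by omega) (hs ▸ (by simp : (some s : Option σ) ≠ none)) hm
  exact trunc_eq_some.mpr ⟨hi, hux i s hs⟩

lemma isLUB_trunc (x : Lgen σ) : IsLUB (Set.range (trunc x)) x := by
  constructor
  · rintro v ⟨n, rfl⟩
    exact trunc_le x n
  · intro v hv
    intro i s hs
    exact hv ⟨i + 1, rfl⟩ i s (trunc_eq_some.mpr ⟨by omega, hs⟩)

lemma directedOn_trunc (x : Lgen σ) : DirectedOn (· ≤ ·) (Set.range (trunc x)) := by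
  rintro a ⟨m, rfl⟩ b ⟨n, rfl⟩
  exact ⟨trunc x (max m n), ⟨max m n, rfl⟩, trunc_mono x (le_max_left m n),
    trunc_mono x (le_max_right m n)⟩

lemma lub_attains {d : Set (Lgen σ)} {x : Lgen σ} (hl : IsLUB d x) {n : ℕ} {s : σ}
    (hs : x.toFun n = some s) : ∃ z ∈ d, z.toFun n = some s := by
  by_contra hcon
  push_neg at hcon
  have hz : ∀ z ∈ d, z.toFun n = none := by
    intro z hzd
    cases hzn : z.toFun n with
    | none => rfl
    | some t =>
      have : x.toFun n = some t := hl.1 hzd n t hzn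
      rw [hs] at this
      obtain rfl : s = t := by injection this
      exact absurd hzn (hcon z hzd)
  have hub : trunc x n ∈ upperBounds d := by
    intro z hzd i t hit
    have hin : i < n := by
      by_contra hge
      exact dom_down (by omega) (hit ▸ (by simp : (some t : Option σ) ≠ none)) (hz z hzd)
    exact trunc_eq_some.mpr ⟨hin, hl.1 hzd i t hit⟩
  have : (trunc x n).toFun n = some s := hl.2 hub n s hs
  rw [trunc_none] at this
  exact absurd this (by simp)

lemma exists_ge_trunc {d : Set (Lgen σ)} {x : Lgen σ} (hdir : DirectedOn (· ≤ ·) d)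
    (hne : d.Nonempty) (hl : IsLUB d x) : ∀ n, ∃ z ∈ d, trunc x n ≤ z := by
  intro n
  induction n with
  | zero =>
    obtain ⟨z, hz⟩ := hne
    refine ⟨z, hz, fun i s hs => ?_⟩
    obtain ⟨h1, _⟩ := trunc_eq_some.mp hs
    omega
  | succ n ih =>
    obtain ⟨z, hzd, hz⟩ := ih
    cases hx : x.toFun n with
    | none =>
      refine ⟨z, hzd, fun i s hs => ?_⟩
      obtain ⟨h1, h2⟩ := trunc_eq_some.mp hs
      have hin : i < n := by
        rcases Nat.lt_or_ge i n with h | h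
        · exact h
        · obtain rfl : i = n := by omega
          rw [hx] at h2
          exact absurd h2 (by simp)
      exact hz i s (trunc_eq_some.mpr ⟨hin, h2⟩)
    | some s =>
      obtain ⟨z', hz'd, hz'⟩ := lub_attains hl hx
      obtain ⟨v, hvd, hzv, hz'v⟩ := hdir z hzd z' hz'd
      refine ⟨v, hvd, fun i t ht => ?_⟩
      obtain ⟨h1, h2⟩ := trunc_eq_some.mp ht
      rcases Nat.lt_or_ge i n with h | h
      · exact hzv i t (hz i t (trunc_eq_some.mpr ⟨h, h2⟩))
      · obtain rfl : i = n := by omega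
        rw [hx] at h2
        obtain rfl : s = t := by injection h2
        exact hz'v i s hz'
  
lemma isOpen_upset {u : Lgen σ} (hu : ∃ m, u.toFun m = none) : IsOpen {v | u ≤ v} := by
  rw [isOpen_iff]
  constructor
  · intro a b hab ha
    exact le_trans ha hab
  · intro d hne hdir x hlub hx
    obtain ⟨m, hm⟩ := hu
    obtain ⟨z, hzd, hz⟩ := exists_ge_trunc hdir hne hlub m
    exact ⟨z, hzd, le_trans (le_trunc_of hx hm) hz⟩

lemma exists_trunc_mem {U : Set (Lgen σ)} {x : Lgen σ} (hU : IsOpen U) (hx : x ∈ U) :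
    ∃ n, trunc x n ∈ U := by
  obtain ⟨v, ⟨n, rfl⟩, hvU⟩ := (isOpen_iff.mp hU).2 (Set.range (trunc x))
    ⟨trunc x 0, 0, rfl⟩ (directedOn_trunc x) x (isLUB_trunc x) hx
  exact ⟨n, hvU⟩


/-! ### Counting helpers -/

lemma count_eq_of {p : ℕ → Prop} [DecidablePred p] (a : ℕ) :
    ∀ k, (∀ j, a ≤ j → j < a + k → ¬ p j) → Nat.count p (a + k) = Nat.count p a := by
  intro k
  induction k with
  | zero => intro _; rfl
  | succ k ih =>
    intro hj
    rw [show a + (k + 1) = (a + k) + 1 from rfl, Nat.count_succ,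
      if_neg (hj _ (by omega) (by omega)), ih (fun j h1 h2 => hj j h1 (by omega)), Nat.add_zero]

lemma count_le_of_bound {p : ℕ → Prop} [DecidablePred p] {a : ℕ}
    (h : ∀ j, a ≤ j → ¬ p j) (i : ℕ) : Nat.count p i ≤ Nat.count p a := by
  rcases Nat.le_total i a with hle | hle
  · exact Nat.count_monotone p hle
  · obtain ⟨k, rfl⟩ := Nat.exists_eq_add_of_le hle
    rw [count_eq_of a k (fun j h1 _ => h j h1)]

lemma count_congr_below {p q : ℕ → Prop} [DecidablePred p] [DecidablePred q] :
    ∀ i, (∀ j, j < i → (p j ↔ q j)) → Nat.count p i = Nat.count q i := by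
  intro i
  induction i with
  | zero => intro _; rfl
  | succ i ih =>
    intro hj
    rw [Nat.count_succ, Nat.count_succ, ih (fun j h => hj j (by omega))]
    by_cases hp : p i
    · rw [if_pos hp, if_pos ((hj i (by omega)).mp hp)]
    · rw [if_neg hp, if_neg (fun hq => hp ((hj i (by omega)).mpr hq))]

lemma nth_count_valid {p : ℕ → Prop} [DecidablePred p] {n i : ℕ} (hge : n < Nat.count p i) :
    p (Nat.nth p n) ∧ Nat.count p (Nat.nth p n) = n := by
  have hv : ∀ hf : (setOf p).Finite, n < hf.toFinset.card :=
    fun hf => lt_of_lt_of_le hge (Nat.count_le_card hf i)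
  exact ⟨Nat.nth_mem n hv, Nat.count_nth hv⟩

/-! ### The decoding map -/

/-- `px x i` : position `i` of `x` carries the block separator `false`. -/
def px (x : L2) (i : ℕ) : Prop := x.toFun i = some false

instance (x : L2) : DecidablePred (px x) := fun i =>
  inferInstanceAs (Decidable (x.toFun i = some false))

/-- `Df x n` : `x` contains at least `n` occurrences of `false`. -/
def Df (x : L2) (n : ℕ) : Prop := ∃ i, n ≤ Nat.count (px x) i

/-- Length of the `n`-th block of `true`s of `x`. -/
noncomputable def gapf (x : L2) : ℕ → ℕ
  | 0 => Nat.nth (px x) 0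
  | n + 1 => Nat.nth (px x) (n + 1) - Nat.nth (px x) n - 1

open Classical in
/-- The decoding map: the `n`-th output symbol is `h` applied to the length of the `n`-th
block of `true`s, defined whenever `x` has at least `n + 1` occurrences of `false`. -/
noncomputable def dec (h : ℕ → σ) (x : L2) : Lgen σ where
  toFun n := if Df x (n + 1) then some (h (gapf x n)) else none
  init n hn := by
    by_cases h2 : Df x (n + 1 + 1)
    · obtain ⟨i, hi⟩ := h2
      rw [if_pos ⟨i, by omega⟩]
      simp
    · rw [if_neg h2] at hn
      exact absurd rfl hn

open Classical in
lemma dec_apply (h : ℕ → σ) (x : L2) (n : ℕ) :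
    (dec h x).toFun n = if Df x (n + 1) then some (h (gapf x n)) else none := rfl

lemma dec_some {h : ℕ → σ} {x : L2} {n : ℕ} (hd : Df x (n + 1)) :
    (dec h x).toFun n = some (h (gapf x n)) := by
  rw [dec_apply, if_pos hd]

lemma dec_none {h : ℕ → σ} {x : L2} {n : ℕ} (hd : ¬ Df x (n + 1)) :
    (dec h x).toFun n = none := by
  rw [dec_apply, if_neg hd]

/-- Locality: the `n`-th output symbol only depends on the input up to the
`(n+1)`-st occurrence of `false`. -/
lemma floc (h : ℕ → σ) (x z : L2) (n : ℕ) (hD : Df x (n + 1))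
    (hag : ∀ j, j ≤ Nat.nth (px x) n → ∀ t, x.toFun j = some t → z.toFun j = some t) :
    (dec h z).toFun n = (dec h x).toFun n := by
  obtain ⟨i0, hi0⟩ := hD
  have key : ∀ m, m ≤ n → px x (Nat.nth (px x) m) ∧
      Nat.count (px x) (Nat.nth (px x) m) = m :=
    fun m hm => nth_count_valid (lt_of_lt_of_le (by omega) hi0)
  set iN := Nat.nth (px x) n with hiN
  have hxdom : ∀ j, j ≤ iN → x.toFun j ≠ none := by
    intro j hj
    exact dom_down hj (by rw [(key n le_rfl).1]; simp)
  have hzx : ∀ j, j ≤ iN → z.toFun j = x.toFun j := by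
    intro j hj
    cases hx : x.toFun j with
    | none => exact absurd hx (hxdom j hj)
    | some t => exact hag j hj t hx
  have hiff : ∀ j, j ≤ iN → (px z j ↔ px x j) := by
    intro j hj
    unfold px
    rw [hzx j hj]
  have hcnt : ∀ i, i ≤ iN + 1 → Nat.count (px z) i = Nat.count (px x) i := by
    intro i hi
    exact count_congr_below i (fun j hj => hiff j (by omega))
  have hcsucc : Nat.count (px x) (iN + 1) = n + 1 := by
    rw [Nat.count_succ, (key n le_rfl).2, if_pos (key n le_rfl).1]
  have him : ∀ m, m ≤ n → Nat.nth (px x) m ≤ iN := by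
    intro m hm
    by_contra hgt
    have h1 : Nat.count (px x) (iN + 1) ≤ Nat.count (px x) (Nat.nth (px x) m) :=
      Nat.count_monotone _ (by omega)
    rw [hcsucc, (key m hm).2] at h1
    omega
  have hnth : ∀ m, m ≤ n → Nat.nth (px z) m = Nat.nth (px x) m := by
    intro m hm
    have h1 : px z (Nat.nth (px x) m) :=
      (hiff _ (him m hm)).mpr (key m hm).1
    have h2 : Nat.count (px z) (Nat.nth (px x) m) = m := by
      rw [hcnt _ (by have := him m hm; omega)]
      exact (key m hm).2
    have := Nat.nth_count h1
    rw [h2] at this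
    exact this
  have hDz : Df z (n + 1) := ⟨iN + 1, by rw [hcnt _ le_rfl, hcsucc]⟩
  have hgap : gapf z n = gapf x n := by
    cases n with
    | zero => show Nat.nth (px z) 0 = Nat.nth (px x) 0; rw [hnth 0 le_rfl]
    | succ m =>
      show Nat.nth (px z) (m + 1) - Nat.nth (px z) m - 1 = _
      rw [hnth (m + 1) le_rfl, hnth m (by omega)]
      rfl
  rw [dec_some hDz, dec_some ⟨i0, hi0⟩, hgap]

lemma dec_mono (h : ℕ → σ) {x z : L2} (hxz : x ≤ z) : dec h x ≤ dec h z := by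
  intro n s hs
  by_cases hd : Df x (n + 1)
  · rw [floc h x z n hd (fun j _ t ht => hxz j t ht)]
    exact hs
  · rw [dec_none hd] at hs
    exact absurd hs (by simp)

lemma dec_fin {h : ℕ → σ} {y : L2} (hy : ∃ m, y.toFun m = none) :
    ∃ m, (dec h y).toFun m = none := by
  obtain ⟨m, hm⟩ := hy
  refine ⟨Nat.count (px y) m, dec_none ?_⟩
  rintro ⟨i, hi⟩
  have : Nat.count (px y) i ≤ Nat.count (px y) m := by
    refine count_le_of_bound (fun j hj hpj => ?_) i
    have : y.toFun j ≠ none := by rw [hpj]; simp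
    exact (dom_down hj this) hm
  omega


/-! ### The block-position function and the realizing sequence -/

noncomputable def Bfun (c e : ℕ) (q K : ℕ → ℕ) : ℕ → ℕ
  | 0 => if 0 < c then q 0 else e + K 0
  | n + 1 => if n + 1 < c then q (n + 1) else if n + 1 = c then e + K c
      else Bfun c e q K n + 1 + K (n + 1)

lemma Bfun_lt {c e : ℕ} {q K : ℕ → ℕ} {n : ℕ} (h : n < c) : Bfun c e q K n = q n := by
  cases n with
  | zero => show (if 0 < c then q 0 else _) = q 0; rw [if_pos h]
  | succ m => show (if m + 1 < c then q (m + 1) else _) = _; rw [if_pos h]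

lemma Bfun_c (c e : ℕ) (q K : ℕ → ℕ) : Bfun c e q K c = e + K c := by
  cases c with
  | zero => show (if 0 < 0 then _ else e + K 0) = _; rw [if_neg (lt_irrefl 0)]
  | succ m =>
    show (if m + 1 < m + 1 then _ else if m + 1 = m + 1 then e + K (m + 1) else _) = _
    rw [if_neg (lt_irrefl _), if_pos rfl]

lemma Bfun_gt {c e : ℕ} {q K : ℕ → ℕ} {n : ℕ} (h : c ≤ n) :
    Bfun c e q K (n + 1) = Bfun c e q K n + 1 + K (n + 1) := by
  show (if n + 1 < c then _ else if n + 1 = c then _ else _) = _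
  rw [if_neg (by omega), if_neg (by omega)]

open Classical in
/-- The binary sequence whose `false`s sit exactly at the positions `B n` for `n` in the
domain of the target, padded with `true`s. -/
noncomputable def zB (len : ℕ) (Dw : ℕ → Prop) (B : ℕ → ℕ) : L2 where
  toFun j := if ∃ n, Dw n ∧ j = B n then some false
    else if j < len ∨ ∃ n, Dw n ∧ j ≤ B n then some true else none
  init j hj := by
    by_cases h1 : ∃ n, Dw n ∧ j = B n
    · rw [if_pos h1]; simp
    · rw [if_neg h1]
      have h2 : j < len ∨ ∃ n, Dw n ∧ j ≤ B n := by
        by_cases ha : ∃ n, Dw n ∧ j + 1 = B n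
        · obtain ⟨n, hn, he⟩ := ha
          exact Or.inr ⟨n, hn, by omega⟩
        · rw [if_neg ha] at hj
          by_cases hb : j + 1 < len ∨ ∃ n, Dw n ∧ j + 1 ≤ B n
          · rcases hb with hb | ⟨n, hn, hle⟩
            · exact Or.inl (by omega)
            · exact Or.inr ⟨n, hn, by omega⟩
          · rw [if_neg hb] at hj
            exact absurd rfl hj
      rw [if_pos h2]; simp

open Classical in
lemma zB_apply (len : ℕ) (Dw : ℕ → Prop) (B : ℕ → ℕ) (j : ℕ) :
    (zB len Dw B).toFun j = if ∃ n, Dw n ∧ j = B n then some false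
      else if j < len ∨ ∃ n, Dw n ∧ j ≤ B n then some true else none := rfl

lemma zB_false {len : ℕ} {Dw : ℕ → Prop} {B : ℕ → ℕ} {j : ℕ} :
    (zB len Dw B).toFun j = some false ↔ ∃ n, Dw n ∧ j = B n := by
  rw [zB_apply]
  by_cases h1 : ∃ n, Dw n ∧ j = B n
  · rw [if_pos h1]
    exact ⟨fun _ => h1, fun _ => rfl⟩
  · rw [if_neg h1]
    constructor
    · intro hc
      by_cases h2 : j < len ∨ ∃ n, Dw n ∧ j ≤ B n
      · rw [if_pos h2] at hc
        exact absurd hc (by simp)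
      · rw [if_neg h2] at hc
        exact absurd hc (by simp)
    · intro hc
      exact absurd hc h1

lemma zB_true_of {len : ℕ} {Dw : ℕ → Prop} {B : ℕ → ℕ} {j : ℕ}
    (h1 : ¬ ∃ n, Dw n ∧ j = B n) (h2 : j < len ∨ ∃ n, Dw n ∧ j ≤ B n) :
    (zB len Dw B).toFun j = some true := by
  rw [zB_apply, if_neg h1, if_pos h2]

/-- Prefix surjectivity: any extension of the decoding of a finite sequence is the decoding
of an extension. -/
lemma fsub [Nonempty σ] (h : ℕ → σ) (hh : ∀ (s : σ) (m : ℕ), ∃ k, m ≤ k ∧ h k = s)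
    (y : L2) (hy : ∃ n, y.toFun n = none) (w : Lgen σ) (hw : dec h y ≤ w) :
    ∃ z : L2, y ≤ z ∧ dec h z = w := by
  classical
  obtain ⟨len, hlen⟩ : ∃ len, ∀ j, y.toFun j = none ↔ len ≤ j := by
    refine ⟨Nat.find hy, fun j => ⟨fun hj => ?_, fun hj => ?_⟩⟩
    · by_contra hlt
      exact Nat.find_min hy (by omega) hj
    · by_contra hne
      exact (dom_down hj hne) (Nat.find_spec hy)
  obtain ⟨c, hcdef⟩ : ∃ c, c = Nat.count (px y) len := ⟨_, rfl⟩
  have hDfy : ∀ m, m < c → Df y (m + 1) := fun m hm => ⟨len, by rw [← hcdef]; omega⟩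
  have hwm : ∀ m, m < c → w.toFun m = some (h (gapf y m)) :=
    fun m hm => hw m _ (dec_some (hDfy m hm))
  have hq : ∀ m, m < c → px y (Nat.nth (px y) m) ∧
      Nat.count (px y) (Nat.nth (px y) m) = m := by
    intro m hm
    rw [hcdef] at hm
    exact nth_count_valid hm
  have hqlen : ∀ m, m < c → Nat.nth (px y) m < len := by
    intro m hm
    have hnone : y.toFun (Nat.nth (px y) m) ≠ none := by
      rw [(hq m hm).1]; simp
    by_contra hge
    exact hnone ((hlen _).mpr (by omega))
  have hqmono : ∀ m, m + 1 < c → Nat.nth (px y) m < Nat.nth (px y) (m + 1) := by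
    intro m hm
    by_contra hge
    have := Nat.count_monotone (px y) (show Nat.nth (px y) (m + 1) ≤ Nat.nth (px y) m by omega)
    rw [(hq m (by omega)).2, (hq (m + 1) hm).2] at this
    omega
  obtain ⟨e, hedef⟩ : ∃ e, e = if c = 0 then 0 else Nat.nth (px y) (c - 1) + 1 := ⟨_, rfl⟩
  have helen : e ≤ len := by
    rw [hedef]
    by_cases hc0 : c = 0
    · rw [if_pos hc0]; omega
    · rw [if_neg hc0]
      have := hqlen (c - 1) (by omega)
      omega
  obtain ⟨K, hK1, hK2⟩ : ∃ K : ℕ → ℕ, (∀ n, (if n = c then len - e else 0) ≤ K n) ∧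
      (∀ n, h (K n) = (w.toFun n).getD (Classical.arbitrary σ)) :=
    ⟨fun n => (hh ((w.toFun n).getD (Classical.arbitrary σ)) (if n = c then len - e else 0)).choose,
      fun n => (hh _ _).choose_spec.1, fun n => (hh _ _).choose_spec.2⟩
  obtain ⟨B, hBlt, hBCC, hBsucc⟩ : ∃ B : ℕ → ℕ, (∀ n, n < c → B n = Nat.nth (px y) n) ∧
      (B c = e + K c) ∧ (∀ n, c ≤ n → B (n + 1) = B n + 1 + K (n + 1)) :=
    ⟨Bfun c e (fun m => Nat.nth (px y) m) K, fun n hn => Bfun_lt hn, Bfun_c c e _ K,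
      fun n hn => Bfun_gt hn⟩
  have hBmono : StrictMono B := by
    apply strictMono_nat_of_lt_succ
    intro n
    rcases Nat.lt_trichotomy (n + 1) c with hlt | heq | hgt
    · rw [hBlt n (by omega), hBlt (n + 1) hlt]
      exact hqmono n hlt
    · have h0 : B n = Nat.nth (px y) n := hBlt n (by omega)
      have h1 : B (n + 1) = e + K c := by rw [heq]; exact hBCC
      have h2 : e = Nat.nth (px y) n + 1 := by
        rw [hedef, if_neg (by omega)]
        have hcn : c - 1 = n := by omega
        rw [hcn]
      omega
    · rw [hBsucc n (by omega)]
      omega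
  have hlenBc : len ≤ B c := by
    have := hK1 c
    rw [if_pos rfl] at this
    omega
  have hlenB : ∀ m, c ≤ m → len ≤ B m := fun m hm => le_trans hlenBc (hBmono.monotone hm)
  have hDwlt : ∀ m, m < c → w.toFun m ≠ none := by
    intro m hm
    rw [hwm m hm]
    simp
  have hDwdown : ∀ m n : ℕ, n ≤ m → w.toFun m ≠ none → w.toFun n ≠ none :=
    fun m n hnm hm => dom_down hnm hm
  set Dw := fun n => w.toFun n ≠ none with hDwdef
  set z := zB len Dw B with hzdef
  have hpz : ∀ j, z.toFun j = some false ↔ ∃ n, Dw n ∧ j = B n := fun j => zB_false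
  have hyz : y ≤ z := by
    intro j t hyj
    have hjlen : j < len := by
      by_contra hge
      rw [(hlen j).mpr (by omega)] at hyj
      exact absurd hyj (by simp)
    cases t with
    | false =>
      have hpj : px y j := hyj
      have hmc : Nat.count (px y) j < c := by
        have h1 : Nat.count (px y) j < Nat.count (px y) (j + 1) :=
          Nat.count_lt_count_succ_iff.mpr hpj
        have h2 : Nat.count (px y) (j + 1) ≤ c := by
          rw [hcdef]
          exact Nat.count_monotone _ (by omega)
        omega
      have hqj : Nat.nth (px y) (Nat.count (px y) j) = j := Nat.nth_count hpj
      exact (hpz j).mpr ⟨Nat.count (px y) j, hDwlt _ hmc, by rw [hBlt _ hmc, hqj]⟩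
    | true =>
      have hnotF : ¬ ∃ n, Dw n ∧ j = B n := by
        rintro ⟨m, hDm, rfl⟩
        rcases Nat.lt_or_ge m c with hmc | hmc
        · have hpB : px y (B m) := by
            rw [hBlt m hmc]
            exact (hq m hmc).1
          unfold px at hpB
          rw [hyj] at hpB
          exact absurd hpB (by simp)
        · have := hlenB m hmc
          omega
      exact zB_true_of hnotF (Or.inl hjlen)
  have hpzB : ∀ n, Dw n → px z (B n) := fun n hn => (hpz _).mpr ⟨n, hn, rfl⟩
  have hcB : ∀ n, Dw n → Nat.count (px z) (B n) = n := by
    intro n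
    induction n with
    | zero =>
      intro h0
      have hstep : Nat.count (px z) (0 + B 0) = Nat.count (px z) 0 := by
        refine count_eq_of 0 (B 0) (fun j h1 h2 => ?_)
        show ¬ px z j
        unfold px
        rw [hpz j]
        rintro ⟨m, hm, rfl⟩
        have := hBmono.monotone (Nat.zero_le m)
        omega
      rw [Nat.zero_add] at hstep
      rw [hstep, Nat.count_zero]
    | succ n ih =>
      intro hn1
      have hn : Dw n := hDwdown _ _ (by omega) hn1
      have hBn : B n < B (n + 1) := hBmono (by omega)
      have hstep : Nat.count (px z) ((B n + 1) + (B (n + 1) - B n - 1)) =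
          Nat.count (px z) (B n + 1) := by
        refine count_eq_of _ _ (fun j h1 h2 => ?_)
        show ¬ px z j
        unfold px
        rw [hpz j]
        rintro ⟨m, hm, rfl⟩
        rcases Nat.lt_or_ge m (n + 1) with hc' | hc'
        · have : B m ≤ B n := hBmono.monotone (by omega)
          omega
        · have : B (n + 1) ≤ B m := hBmono.monotone hc'
          omega
      have harith : (B n + 1) + (B (n + 1) - B n - 1) = B (n + 1) := by omega
      rw [harith] at hstep
      rw [hstep, Nat.count_succ, if_pos (hpzB n hn), ih hn]
  have hcBs : ∀ n, Dw n → Nat.count (px z) (B n + 1) = n + 1 := by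
    intro n hn
    rw [Nat.count_succ, if_pos (hpzB n hn), hcB n hn]
  have hbound : ∀ n, ¬ Dw n → ∀ i, Nat.count (px z) i ≤ n := by
    intro n
    induction n with
    | zero =>
      intro h0 i
      have hstep : Nat.count (px z) i ≤ Nat.count (px z) 0 := by
        refine count_le_of_bound (fun j _ hpj => ?_) i
        obtain ⟨m, hm, rfl⟩ := (hpz _).mp hpj
        exact h0 (hDwdown m 0 (Nat.zero_le m) hm)
      simpa using hstep
    | succ n ih =>
      intro hn1 i
      by_cases hn : Dw n
      · have hstep : Nat.count (px z) i ≤ Nat.count (px z) (B n + 1) := by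
          refine count_le_of_bound (fun j hj hpj => ?_) i
          obtain ⟨m, hm, rfl⟩ := (hpz _).mp hpj
          have hmn : m ≤ n := by
            by_contra hgt
            exact hn1 (hDwdown m (n + 1) (by omega) hm)
          have : B m ≤ B n := hBmono.monotone hmn
          omega
        rw [hcBs n hn] at hstep
        exact hstep
      · exact le_trans (ih hn i) (by omega)
  have hDfz : ∀ n, Df z (n + 1) ↔ Dw n := by
    intro n
    constructor
    · rintro ⟨i, hi⟩
      show w.toFun n ≠ none
      intro hwn
      have := hbound n (not_ne_iff.mpr hwn) i
      omega
    · intro hn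
      exact ⟨B n + 1, by rw [hcBs n hn]⟩
  have hnthz : ∀ n, Dw n → Nat.nth (px z) n = B n := by
    intro n hn
    have := Nat.nth_count (hpzB n hn)
    rw [hcB n hn] at this
    exact this
  refine ⟨z, hyz, lext (fun n => ?_)⟩
  by_cases hDwn : Dw n
  · obtain ⟨s, hws⟩ : ∃ s, w.toFun n = some s := by
      cases hwn : w.toFun n with
      | none => exact absurd hwn hDwn
      | some s => exact ⟨s, rfl⟩
    rw [dec_some ((hDfz n).mpr hDwn), hws]
    rcases Nat.lt_trichotomy n c with hnc | hnc | hnc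
    · -- complete blocks of `y`
      have hg : gapf z n = gapf y n := by
        cases n with
        | zero =>
          show Nat.nth (px z) 0 = Nat.nth (px y) 0
          rw [hnthz 0 hDwn, hBlt 0 hnc]
        | succ m =>
          show Nat.nth (px z) (m + 1) - Nat.nth (px z) m - 1 = _
          rw [hnthz (m + 1) hDwn, hnthz m (hDwdown _ _ (by omega) hDwn),
            hBlt (m + 1) hnc, hBlt m (by omega)]
          rfl
      have hwn := hwm n hnc
      rw [hws] at hwn
      injection hwn with hinj
      rw [hg, ← hinj]
    · -- the block straddling the end of `y`
      subst hnc
      have hg : gapf z n = K n := by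
        cases hn0 : n with
        | zero =>
          subst hn0
          show Nat.nth (px z) 0 = K 0
          rw [hnthz 0 hDwn, hBCC, hedef, if_pos rfl]
          omega
        | succ m =>
          subst hn0
          show Nat.nth (px z) (m + 1) - Nat.nth (px z) m - 1 = K (m + 1)
          rw [hnthz (m + 1) hDwn, hnthz m (hDwdown _ _ (by omega) hDwn),
            hBCC, hBlt m (by omega), hedef, if_neg (by omega)]
          have hcm : m + 1 - 1 = m := by omega
          rw [hcm]
          omega
      have := hK2 n
      rw [hws] at this
      simp only [Option.getD_some] at this
      rw [hg, this]
    · -- blocks beyond `y`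
      have hn1 : ∃ m, n = m + 1 := ⟨n - 1, by omega⟩
      obtain ⟨m, rfl⟩ := hn1
      have hg : gapf z (m + 1) = K (m + 1) := by
        show Nat.nth (px z) (m + 1) - Nat.nth (px z) m - 1 = K (m + 1)
        rw [hnthz (m + 1) hDwn, hnthz m (hDwdown _ _ (by omega) hDwn),
          hBsucc m (by omega)]
        omega
      have := hK2 (m + 1)
      rw [hws] at this
      simp only [Option.getD_some] at this
      rw [hg, this]
  · rw [dec_none (fun hD => hDwn ((hDfz n).mp hD))]
    exact (not_ne_iff.mp hDwn).symm

end S10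

open S10

/-- For every nonempty countable `σ`, the space `𝐋_σ` is an interior image
of `𝐋₂`: there is a surjective map from `L₂` onto `L_σ` that is continuous and open with
respect to the Scott topologies. -/
theorem statement10 (σ : Type*) [Countable σ] [Nonempty σ] :
    ∃ f : L2 → Lgen σ, Function.Surjective f ∧ Continuous f ∧ IsOpenMap f := by
  classical
  obtain ⟨g, hg⟩ := exists_surjective_nat σ
  set h : ℕ → σ := fun n => g (Nat.unpair n).1 with hhdef
  have hh : ∀ (s : σ) (m : ℕ), ∃ k, m ≤ k ∧ h k = s := by
    intro s m
    obtain ⟨a, ha⟩ := hg s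
    exact ⟨Nat.pair a m, Nat.right_le_pair a m, by rw [hhdef]; simp [Nat.unpair_pair, ha]⟩
  refine ⟨dec h, ?_, ?_, ?_⟩
  · -- surjectivity
    intro w
    have hbot : ∃ z : L2, (⟨fun _ => none, fun n hn => absurd rfl hn⟩ : L2) ≤ z ∧ dec h z = w := by
      refine fsub h hh _ ⟨0, rfl⟩ w ?_
      intro n s hs
      have hnd : ¬ Df (⟨fun _ => none, fun n hn => absurd rfl hn⟩ : L2) (n + 1) := by
        rintro ⟨i, hi⟩
        have hz : Nat.count (px (⟨fun _ => none, fun n hn => absurd rfl hn⟩ : L2)) i ≤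
            Nat.count (px (⟨fun _ => none, fun n hn => absurd rfl hn⟩ : L2)) 0 := by
          refine count_le_of_bound (fun j _ hpj => ?_) i
          exact absurd hpj (by intro hc; exact Option.some_ne_none false (show (none : Option Bool) = some false from hc).symm)
        rw [Nat.count_zero] at hz
        omega
      rw [dec_none hnd] at hs
      exact absurd hs (by simp)
    obtain ⟨z, _, hz⟩ := hbot
    exact ⟨z, hz⟩
  · -- continuity
    rw [continuous_def]
    intro U hU
    obtain ⟨hUu, hUs⟩ := isOpen_iff.mp hU
    rw [isOpen_iff]
    constructor
    · intro a b hab ha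
      exact hUu (dec_mono h hab) ha
    · intro d hne hdir x hlub hx
      have hlub' : IsLUB (dec h '' d) (dec h x) := by
        constructor
        · rintro v ⟨a, had, rfl⟩
          exact dec_mono h (hlub.1 had)
        · intro v hv n s hs
          have hD : Df x (n + 1) := by
            by_contra hD
            rw [dec_none hD] at hs
            exact absurd hs (by simp)
          obtain ⟨z, hzd, hz⟩ := exists_ge_trunc hdir hne hlub (Nat.nth (px x) n + 1)
          have hzn : (dec h z).toFun n = (dec h x).toFun n := by
            refine floc h x z n hD (fun j hj t ht => ?_)
            exact hz j t (trunc_eq_some.mpr ⟨by omega, ht⟩)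
          have hvz : dec h z ≤ v := hv ⟨z, hzd, rfl⟩
          exact hvz n s (by rw [hzn]; exact hs)
      have hdir' : DirectedOn (· ≤ ·) (dec h '' d) := by
        rintro a ⟨a0, ha0, rfl⟩ b ⟨b0, hb0, rfl⟩
        obtain ⟨c0, hc0, hac, hbc⟩ := hdir a0 ha0 b0 hb0
        exact ⟨dec h c0, ⟨c0, hc0, rfl⟩, dec_mono h hac, dec_mono h hbc⟩
      obtain ⟨v, ⟨z0, hz0d, rfl⟩, hvU⟩ :=
        hUs (dec h '' d) (hne.image (dec h)) hdir' (dec h x) hlub' hx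
      exact ⟨z0, hz0d, hvU⟩
  · -- openness
    intro U hU
    obtain ⟨hUu, hUs⟩ := isOpen_iff.mp hU
    rw [isOpen_iff]
    constructor
    · rintro w1 w2 h12 ⟨x, hxU, rfl⟩
      obtain ⟨n, hyU⟩ := exists_trunc_mem hU hxU
      have hfy : dec h (trunc x n) ≤ w2 := le_trans (dec_mono h (trunc_le x n)) h12
      obtain ⟨z, hyz, hzw⟩ := fsub h hh (trunc x n) ⟨n, trunc_none x n⟩ w2 hfy
      exact ⟨z, hUu hyz hyU, hzw⟩
    · rintro d hne hdir ww hlub ⟨x, hxU, rfl⟩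
      obtain ⟨n, hyU⟩ := exists_trunc_mem hU hxU
      have hfin : ∃ m, (dec h (trunc x n)).toFun m = none := dec_fin ⟨n, trunc_none x n⟩
      have hopen' := isOpen_upset hfin
      have hmem : dec h x ∈ {v | dec h (trunc x n) ≤ v} := dec_mono h (trunc_le x n)
      obtain ⟨v, hvd, hv⟩ := (isOpen_iff.mp hopen').2 d hne hdir (dec h x) hlub hmem
      obtain ⟨z, hyz, hzv⟩ := fsub h hh (trunc x n) ⟨n, trunc_none x n⟩ v hv
      exact ⟨v, hvd, z, hUu hyz hyU, hzv⟩
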